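/- For k ∈ ℕ let m(k) = ⌊k/6⌋ and D(k) = ∏_{i=0}^{m(k)-1} (k - 6i - 1)(k - 6i - 2), with D(k) = 1 when m(k) = 0. Then for every R > 0, the series ∑_{k=0}^∞ (2^{m(k)} / D(k))·R^k converges. -/

import Mathlib

noncomputable def vimMajorantDenom (k : ℕ) : ℝ :=
  ∏ i ∈ Finset.range (k / 6), (((k : ℝ) - 6 * (i : ℝ) - 1) * ((k : ℝ) - 6 * (i : ℝ) - 2))

lemma prod_sub_eq_factorial (m : ℕ) : (∏ i ∈ Finset.range m, (m - i)) = Nat.factorial m := by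
  have h := Finset.prod_range_reflect (fun j => j + 1) m
  rw [Finset.prod_range_add_one_eq_factorial] at h
  rw [← h]
  apply Finset.prod_congr rfl
  intro i hi
  rw [Finset.mem_range] at hi
  omega

lemma fact_sq_le_denom (k : ℕ) : ((Nat.factorial (k / 6) : ℝ)) ^ 2 ≤ vimMajorantDenom k := by
  set m := k / 6 with hm
  have key : (∏ i ∈ Finset.range m, (((m - i : ℕ) : ℝ)) ^ 2) ≤ vimMajorantDenom k := by
    unfold vimMajorantDenom
    rw [← hm]
    apply Finset.prod_le_prod
    · intro i _; positivity
    · intro i hi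
      rw [Finset.mem_range] at hi
      have hdiv : 6 * (k / 6) ≤ k := Nat.mul_div_le k 6
      have hk : 6 * m ≤ k := by omega
      have h1 : ((m - i : ℕ) : ℝ) ≤ (k : ℝ) - 6 * (i : ℝ) - 1 := by
        have : (m - i : ℕ) = m - i := rfl
        have hmi : i < m := hi
        push_cast [Nat.cast_sub hmi.le]
        have : (6 : ℝ) * m ≤ k := by exact_mod_cast hk
        have : (1 : ℝ) ≤ (m : ℝ) - i := by
          have : i + 1 ≤ m := hmi
          have := (Nat.cast_le (α := ℝ)).2 this
          push_cast at this; linarith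
        linarith
      have h2 : ((m - i : ℕ) : ℝ) ≤ (k : ℝ) - 6 * (i : ℝ) - 2 := by
        have hmi : i < m := hi
        push_cast [Nat.cast_sub hmi.le]
        have h6m : (6 : ℝ) * m ≤ k := by exact_mod_cast hk
        have : (1 : ℝ) ≤ (m : ℝ) - i := by
          have : i + 1 ≤ m := hmi
          have := (Nat.cast_le (α := ℝ)).2 this
          push_cast at this; linarith
        linarith
      have hnn : (0 : ℝ) ≤ ((m - i : ℕ) : ℝ) := Nat.cast_nonneg _
      calc ((m - i : ℕ) : ℝ) ^ 2 = ((m - i : ℕ) : ℝ) * ((m - i : ℕ) : ℝ) := sq _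
      _ ≤ ((k : ℝ) - 6 * (i : ℝ) - 1) * ((k : ℝ) - 6 * (i : ℝ) - 2) :=
          mul_le_mul h1 h2 hnn (by linarith)
  calc ((Nat.factorial m : ℝ)) ^ 2
      = (∏ i ∈ Finset.range m, (((m - i : ℕ) : ℝ))) ^ 2 := by
        rw [← Nat.cast_prod, prod_sub_eq_factorial]
    _ = ∏ i ∈ Finset.range m, (((m - i : ℕ) : ℝ)) ^ 2 := by rw [← Finset.prod_pow]
    _ ≤ vimMajorantDenom k := key

lemma denom_pos (k : ℕ) : 0 < vimMajorantDenom k := by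
  have h := fact_sq_le_denom k
  have : (0 : ℝ) < ((Nat.factorial (k / 6) : ℝ)) ^ 2 := by positivity
  linarith

lemma summable_div6 (x : ℝ) : Summable (fun k : ℕ => x ^ (k / 6) / Nat.factorial (k / 6)) := by
  have hf : Summable (fun n : ℕ => |x| ^ n / Nat.factorial n) := by
    have := Real.summable_pow_div_factorial |x|
    exact this
  have hg : Summable (fun _ : Fin 6 => (1 : ℝ)) := summable_of_finite_support (Set.toFinite _)
  have hprod : Summable (fun p : ℕ × Fin 6 => (|x| ^ p.1 / Nat.factorial p.1) * 1) :=
    hf.mul_of_nonneg hg (fun n => by positivity) (fun _ => zero_le_one)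
  have hcomp : Summable ((fun p : ℕ × Fin 6 => (|x| ^ p.1 / Nat.factorial p.1) * 1) ∘
      (Nat.divModEquiv 6)) := (Nat.divModEquiv 6).summable_iff.2 hprod
  have habs : Summable (fun k : ℕ => |x| ^ (k / 6) / Nat.factorial (k / 6)) := by
    simpa [Function.comp_def, Nat.divModEquiv] using hcomp
  apply habs.of_norm_bounded
  intro k
  rw [norm_div, norm_pow]
  simp [abs_abs, Nat.abs_cast]

/-- for every `R > 0`, the majorant series `∑ (2^{⌊k/6⌋}/D k) R^k`
converges. -/
theorem vim_majorant_series_summable :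
    ∀ R : ℝ, 0 < R →
      Summable (fun k : ℕ => (2 ^ (k / 6) / vimMajorantDenom k) * R ^ k) := by
  intro R hR
  set M : ℝ := max R 1 with hM
  have hM1 : (1 : ℝ) ≤ M := le_max_right _ _
  have hRM : R ≤ M := le_max_left _ _
  have hMpos : 0 < M := lt_of_lt_of_le one_pos hM1
  have hsum : Summable (fun k : ℕ => M ^ 5 * ((2 * M ^ 6) ^ (k / 6) / Nat.factorial (k / 6))) :=
    (summable_div6 (2 * M ^ 6)).mul_left _
  apply hsum.of_nonneg_of_le
  · intro k
    have := denom_pos k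
    positivity
  · intro k
    set m := k / 6 with hm
    have hfact1 : (1 : ℝ) ≤ (Nat.factorial m : ℝ) := by exact_mod_cast (Nat.factorial_pos m)
    have hD : (Nat.factorial m : ℝ) ≤ vimMajorantDenom k := by
      have h := fact_sq_le_denom k
      nlinarith [fact_sq_le_denom k]
    have hDpos := denom_pos k
    have hkle : k ≤ 6 * m + 5 := by
      have := Nat.mod_lt k (show 0 < 6 by norm_num)
      have := Nat.div_add_mod k 6
      omega
    have step1 : (2 : ℝ) ^ m / vimMajorantDenom k * R ^ k ≤
        (2 : ℝ) ^ m / (Nat.factorial m : ℝ) * M ^ (6 * m + 5) := by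
      have hpow : R ^ k ≤ M ^ (6 * m + 5) := by
        calc R ^ k ≤ M ^ k := pow_le_pow_left₀ hR.le hRM k
        _ ≤ M ^ (6 * m + 5) := pow_le_pow_right₀ hM1 hkle
      have hdiv : (2 : ℝ) ^ m / vimMajorantDenom k ≤ (2 : ℝ) ^ m / (Nat.factorial m : ℝ) :=
        div_le_div_of_nonneg_left (by positivity) (by positivity) hD
      have h2 : (0 : ℝ) ≤ (2 : ℝ) ^ m / vimMajorantDenom k := by positivity
      exact mul_le_mul hdiv hpow (by positivity) (by positivity)
    calc (2 : ℝ) ^ m / vimMajorantDenom k * R ^ k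
        ≤ (2 : ℝ) ^ m / (Nat.factorial m : ℝ) * M ^ (6 * m + 5) := step1
      _ = M ^ 5 * ((2 * M ^ 6) ^ m / Nat.factorial m) := by
          rw [pow_add, pow_mul, mul_pow]
          field_simp
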